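/- arXiv:1103.1885 — 6 statements merged into one kernel-verified Lean document; each statement's English description precedes it below -/
import Mathlib

section
/- Let a, b be natural numbers with a + b < 2^m, and for a natural number x < 2^m define J_x = { c : binary digits of c are pointwise ≤ those of x }. Then a natural number c belongs to J_{a+b} if and only if the number of decompositions c = c₁ + c₂ with c₁ ∈ J_a and c₂ ∈ J_b is odd. -/
/-- Digit domination: every binary digit of `y` is at most the corresponding digit of `x`. -/
def DigitLE (y x : ℕ) : Prop := ∀ i, y / 2 ^ i % 2 ≤ x / 2 ^ i % 2

lemma DigitLE.le : ∀ y x : ℕ, DigitLE y x → y ≤ x := by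
  intro y
  induction y using Nat.strong_induction_on with
  | _ y ih =>
    intro x h
    rcases Nat.eq_zero_or_pos y with rfl | hy
    · exact Nat.zero_le x
    · have hdiv : DigitLE (y / 2) (x / 2) := by
        intro i
        have h' := h (i + 1)
        simpa [Nat.div_div_eq_div_mul, pow_succ, mul_comm] using h'
      have h2 : y / 2 ≤ x / 2 := ih (y / 2) (Nat.div_lt_self hy one_lt_two) _ hdiv
      have h0 : y % 2 ≤ x % 2 := by simpa using h 0
      omega

lemma odd_choose_iff (m x y : ℕ) (hx : x < 2 ^ m) :
    Odd (x.choose y) ↔ (y < 2 ^ m ∧ DigitLE y x) := by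
  have key : y ≤ x → (Odd (x.choose y) ↔ DigitLE y x) := by
    intro hyx
    have hy : y < 2 ^ m := lt_of_le_of_lt hyx hx
    have hl := @Choose.choose_modEq_prod_range_choose_nat x y 2 ⟨Nat.prime_two⟩ m hx hy
    rw [Nat.odd_iff, Nat.ModEq] at *
    rw [hl, ← Nat.odd_iff]
    have hodd : Odd (∏ i ∈ Finset.range m, (x / 2 ^ i % 2).choose (y / 2 ^ i % 2)) ↔
        ∀ i ∈ Finset.range m, Odd ((x / 2 ^ i % 2).choose (y / 2 ^ i % 2)) := by
      simp only [← Nat.not_even_iff_odd, even_iff_two_dvd]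
      rw [(Nat.Prime.prime Nat.prime_two).dvd_finset_prod_iff]
      push_neg
      tauto
    rw [hodd]
    constructor
    · intro h i
      rcases lt_or_ge i m with hi | hi
      · have := h i (Finset.mem_range.mpr hi)
        have hxb := Nat.mod_two_eq_zero_or_one (x / 2 ^ i)
        have hyb := Nat.mod_two_eq_zero_or_one (y / 2 ^ i)
        rcases hxb with h1 | h1 <;> rcases hyb with h2 | h2 <;>
          simp [h1, h2, Nat.odd_iff] at this ⊢
      · have : y / 2 ^ i = 0 := Nat.div_eq_of_lt (lt_of_lt_of_le hy
          (Nat.pow_le_pow_right (by norm_num) hi))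
        simp [this]
    · intro h i _
      have := h i
      have hxb := Nat.mod_two_eq_zero_or_one (x / 2 ^ i)
      have hyb := Nat.mod_two_eq_zero_or_one (y / 2 ^ i)
      rcases hxb with h1 | h1 <;> rcases hyb with h2 | h2 <;>
        simp [h1, h2, Nat.odd_iff] at this ⊢
  constructor
  · intro h
    have hyx : y ≤ x := by
      by_contra hc
      rw [Nat.choose_eq_zero_of_lt (by omega)] at h
      simp at h
    exact ⟨lt_of_le_of_lt hyx hx, (key hyx).mp h⟩
  · intro ⟨h1, h2⟩
    exact (key h2.le).mpr h2

lemma odd_iff_cast_zmod2 (n : ℕ) : Odd n ↔ (n : ZMod 2) = 1 := by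
  rw [Nat.odd_iff, ZMod.natCast_eq_iff]
  have h1 : ((1 : ZMod 2) : ZMod 2).val = 1 := rfl
  constructor
  · intro h
    exact ⟨n / 2, by rw [h1]; omega⟩
  · rintro ⟨k, hk⟩
    rw [h1] at hk
    omega

open scoped Classical in
/-- For `a + b < 2^m` and `J_x = {c < 2^m : c ⪯ x}` (digitwise domination), a natural
number `c` belongs to `J_{a+b}` iff the number of ordered decompositions
`c = c₁ + c₂` with `c₁ ∈ J_a` and `c₂ ∈ J_b` is odd. -/
theorem mem_J_add_iff_odd_decompositions (m a b c : ℕ) (hab : a + b < 2 ^ m) :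
    (c < 2 ^ m ∧ DigitLE c (a + b)) ↔
      Odd ((((Finset.range (c + 1)) ×ˢ (Finset.range (c + 1))).filter
        (fun q => q.1 + q.2 = c ∧ (q.1 < 2 ^ m ∧ DigitLE q.1 a) ∧
          (q.2 < 2 ^ m ∧ DigitLE q.2 b))).card) := by
  have ha : a < 2 ^ m := by omega
  have hb : b < 2 ^ m := by omega
  rw [← odd_choose_iff m (a + b) c hab, Nat.add_choose_eq,
    odd_iff_cast_zmod2, odd_iff_cast_zmod2]
  have hsub : Finset.HasAntidiagonal.antidiagonal c ⊆ Finset.range (c + 1) ×ˢ Finset.range (c + 1) := by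
    intro q hq
    rw [Finset.HasAntidiagonal.mem_antidiagonal] at hq
    simp only [Finset.mem_product, Finset.mem_range]
    omega
  have key : ((((Finset.range (c + 1)) ×ˢ (Finset.range (c + 1))).filter
        (fun q => q.1 + q.2 = c ∧ (q.1 < 2 ^ m ∧ DigitLE q.1 a) ∧
          (q.2 < 2 ^ m ∧ DigitLE q.2 b))).card : ZMod 2)
      = ((∑ ij ∈ Finset.HasAntidiagonal.antidiagonal c, a.choose ij.1 * b.choose ij.2 : ℕ) : ZMod 2) := by
    rw [Finset.card_filter]
    push_cast
    rw [← Finset.sum_subset hsub (by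
      intro q _ hq
      rw [Finset.HasAntidiagonal.mem_antidiagonal] at hq
      simp [hq])]
    apply Finset.sum_congr rfl
    intro q hq
    rw [Finset.HasAntidiagonal.mem_antidiagonal] at hq
    have hA : Odd (a.choose q.1) ↔ (q.1 < 2 ^ m ∧ DigitLE q.1 a) := odd_choose_iff m a q.1 ha
    have hB : Odd (b.choose q.2) ↔ (q.2 < 2 ^ m ∧ DigitLE q.2 b) := odd_choose_iff m b q.2 hb
    have hz : ∀ n : ℕ, ¬ Odd n → (n : ZMod 2) = 0 := by
      intro n hn
      have := (odd_iff_cast_zmod2 n).not.mp hn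
      have h01 : ∀ z : ZMod 2, z = 0 ∨ z = 1 := by decide
      rcases h01 (n : ZMod 2) with h | h
      · exact h
      · exact absurd h this
    have hcond : (q.1 + q.2 = c ∧ (q.1 < 2 ^ m ∧ DigitLE q.1 a) ∧
        (q.2 < 2 ^ m ∧ DigitLE q.2 b)) ↔ (Odd (a.choose q.1) ∧ Odd (b.choose q.2)) := by
      rw [hA, hB]; tauto
    by_cases h1 : Odd (a.choose q.1) <;> by_cases h2 : Odd (b.choose q.2)
    · rw [if_pos (hcond.mpr ⟨h1, h2⟩), (odd_iff_cast_zmod2 _).mp h1,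
        (odd_iff_cast_zmod2 _).mp h2, one_mul]
    · rw [if_neg (fun h => h2 (hcond.mp h).2), hz _ h2, mul_zero]
    · rw [if_neg (fun h => h1 (hcond.mp h).1), hz _ h1, zero_mul]
    · rw [if_neg (fun h => h1 (hcond.mp h).1), hz _ h1, zero_mul]
  rw [key]
end

section
/- Let S be an abelian subgroup of the N-qubit Pauli group not containing −I, with r independent generators. Then the stabilizer subspace V_S = { ψ : Uψ = ψ for all U ∈ S } has dimension 2^{N−r}. -/
open Matrix

/-- The Pauli `X` operator on qubit `j` of an `N`-qubit system: in the computational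
basis (indexed by `Fin N → ZMod 2`) it flips the `j`-th bit. -/
def pauliX (N : ℕ) (j : Fin N) :
    Matrix (Fin N → ZMod 2) (Fin N → ZMod 2) ℂ :=
  Matrix.of fun a b => if a = Function.update b j (b j + 1) then 1 else 0

/-- The Pauli `Z` operator on qubit `j` of an `N`-qubit system: diagonal, with
eigenvalue `(-1)^{b_j}` on the basis state `b`. -/
def pauliZ (N : ℕ) (j : Fin N) :
    Matrix (Fin N → ZMod 2) (Fin N → ZMod 2) ℂ :=
  Matrix.of fun a b => if a = b then (-1 : ℂ) ^ (b j).val else 0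

/-- The `N`-qubit Pauli group: generated (as a multiplicative closure) by `iI` and the
single-qubit operators `X_j`, `Z_j`.  (Every element has an inverse in the closure,
so this submonoid is in fact a group of units.) -/
def pauliGroup (N : ℕ) :
    Submonoid (Matrix (Fin N → ZMod 2) (Fin N → ZMod 2) ℂ) :=
  Submonoid.closure ({Complex.I • 1} ∪ Set.range (pauliX N) ∪ Set.range (pauliZ N))

namespace StabAux

variable {N : ℕ}

noncomputable def chi (b w : Fin N → ZMod 2) : ℂ := ∏ j, (-1 : ℂ) ^ ((b j) * (w j)).val

noncomputable def XZ (a b : Fin N → ZMod 2) :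
    Matrix (Fin N → ZMod 2) (Fin N → ZMod 2) ℂ :=
  Matrix.of fun v w => if v = w + a then chi b w else 0

lemma neg_one_pow_val_add (u v : ZMod 2) :
    ((-1 : ℂ)) ^ ((u + v).val) = (-1) ^ u.val * (-1) ^ v.val := by
  have hz : ∀ x : ZMod 2, x = 0 ∨ x = 1 := by decide
  have h11 : (1 + 1 : ZMod 2) = 0 := by decide
  have hv0 : (0 : ZMod 2).val = 0 := rfl
  have hv1 : (1 : ZMod 2).val = 1 := rfl
  rcases hz u with h | h <;> rcases hz v with h' | h' <;> subst h <;> subst h' <;>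
    simp [h11, hv0, hv1]

lemma chi_mul_same (b b' w : Fin N → ZMod 2) :
    chi b w * chi b' w = chi (b + b') w := by
  unfold chi
  rw [← Finset.prod_mul_distrib]
  refine Finset.prod_congr rfl fun j _ => ?_
  rw [Pi.add_apply, add_mul, neg_one_pow_val_add]

lemma chi_add_right (b w a : Fin N → ZMod 2) :
    chi b (w + a) = chi b w * chi b a := by
  unfold chi
  rw [← Finset.prod_mul_distrib]
  refine Finset.prod_congr rfl fun j _ => ?_
  rw [Pi.add_apply, mul_add, neg_one_pow_val_add]

lemma chi_zero_left (w : Fin N → ZMod 2) : chi (0 : Fin N → ZMod 2) w = 1 := by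
  unfold chi
  simp

lemma XZ_zero_zero : XZ (0 : Fin N → ZMod 2) 0 = 1 := by
  ext v w
  simp [XZ, Matrix.one_apply, chi_zero_left]

lemma XZ_mul (a b a' b' : Fin N → ZMod 2) :
    XZ a b * XZ a' b' = chi b a' • XZ (a + a') (b + b') := by
  ext v w
  rw [Matrix.mul_apply]
  simp only [XZ, Matrix.of_apply, Matrix.smul_apply, smul_eq_mul]
  rw [Finset.sum_eq_single (w + a')]
  · rw [if_pos rfl]
    have hiff : v = w + a' + a ↔ v = w + (a + a') := by
      rw [add_assoc, add_comm a' a]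
    by_cases hv : v = w + (a + a')
    · rw [if_pos (hiff.mpr hv), if_pos hv, chi_add_right]
      rw [mul_comm (chi b w) (chi b a'), mul_assoc, chi_mul_same]
    · rw [if_neg (fun h => hv (hiff.mp h)), if_neg hv, zero_mul, mul_zero]
  · intro u _ hu
    rw [if_neg hu, mul_zero]
  · intro h
    exact absurd (Finset.mem_univ _) h

lemma trace_XZ (a b : Fin N → ZMod 2) :
    Matrix.trace (XZ a b) = if a = 0 ∧ b = 0 then (2 : ℂ) ^ N else 0 := by
  rw [Matrix.trace]
  by_cases ha : a = 0
  · subst ha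
    have hdiag : ∀ v, Matrix.diag (XZ (0 : Fin N → ZMod 2) b) v = chi b v := by
      intro v; simp [XZ, Matrix.diag]
    rw [Finset.sum_congr rfl fun v _ => hdiag v]
    by_cases hb : b = 0
    · subst hb
      simp only [chi_zero_left, Finset.sum_const, Finset.card_univ, nsmul_eq_mul, mul_one,
        true_and, if_pos rfl]
      rw [Fintype.card_fun]
      simp
    · rw [if_neg (by simp [hb])]
      obtain ⟨j, hj⟩ : ∃ j, b j ≠ 0 := by
        by_contra h
        push_neg at h
        exact hb (funext fun j => h j)
      have hbj : b j = 1 := by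
        have hz : ∀ x : ZMod 2, x = 0 ∨ x = 1 := by decide
        rcases hz (b j) with h | h
        · exact absurd h hj
        · exact h
      set e : Fin N → ZMod 2 := Pi.single j 1 with he
      have hchie : chi b e = -1 := by
        unfold chi
        rw [Finset.prod_eq_single j]
        · simp [he, hbj, ZMod.val_one]
        · intro i _ hi
          simp [he, Pi.single_eq_of_ne hi]
        · intro h; exact absurd (Finset.mem_univ _) h
      have hsum : ∑ v, chi b v = ∑ v, chi b (v + e) :=
        (Fintype.sum_equiv (Equiv.addRight e) _ _ (fun v => rfl)).symm
      have : ∑ v, chi b v = -∑ v, chi b v := by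
        nth_rewrite 1 [hsum]
        simp only [chi_add_right, hchie, mul_neg, mul_one]
        rw [← Finset.sum_neg_distrib]
      have hx : ∑ v, chi b v + ∑ v, chi b v = 0 := by linear_combination this
      exact add_self_eq_zero.mp hx
  · rw [if_neg (by tauto)]
    refine Finset.sum_eq_zero fun v _ => ?_
    have : v ≠ v + a := by
      intro h
      exact ha (by simpa using h)
    simp [XZ, Matrix.diag, this]

/-- the submonoid of scaled XZ monomials -/
noncomputable def monoSubmonoid (N : ℕ) :
    Submonoid (Matrix (Fin N → ZMod 2) (Fin N → ZMod 2) ℂ) where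
  carrier := {U | ∃ (α : ℂ) (a b : Fin N → ZMod 2), U = α • XZ a b}
  one_mem' := ⟨1, 0, 0, by rw [XZ_zero_zero, one_smul]⟩
  mul_mem' := by
    rintro U V ⟨α, a, b, rfl⟩ ⟨α', a', b', rfl⟩
    refine ⟨α * α' * chi b a', a + a', b + b', ?_⟩
    rw [smul_mul_assoc, mul_smul_comm, XZ_mul, smul_smul, smul_smul, mul_assoc]

lemma pauliX_eq (j : Fin N) : pauliX N j = XZ (Pi.single j 1) 0 := by
  ext v w
  have hupd : Function.update w j (w j + 1) = w + Pi.single j 1 := by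
    funext i
    by_cases hi : i = j
    · subst hi; simp
    · simp [Function.update, hi, Pi.single_eq_of_ne hi]
  simp [pauliX, XZ, chi, hupd]

lemma pauliZ_eq (j : Fin N) : pauliZ N j = XZ 0 (Pi.single j 1) := by
  ext v w
  have hchi : chi (Pi.single j 1) w = (-1 : ℂ) ^ (w j).val := by
    unfold chi
    rw [Finset.prod_eq_single j]
    · simp
    · intro i _ hi
      simp [Pi.single_eq_of_ne hi]
    · intro h; exact absurd (Finset.mem_univ _) h
  simp [pauliZ, XZ, hchi]

lemma pauli_struct {U : Matrix (Fin N → ZMod 2) (Fin N → ZMod 2) ℂ}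
    (h : U ∈ pauliGroup N) : ∃ (α : ℂ) (a b : Fin N → ZMod 2), U = α • XZ a b := by
  suffices hle : pauliGroup N ≤ monoSubmonoid N from hle h
  refine Submonoid.closure_le.mpr ?_
  rintro V ((hV | ⟨j, rfl⟩) | ⟨j, rfl⟩)
  · rcases hV with (rfl : V = _)
    exact ⟨Complex.I, 0, 0, by rw [XZ_zero_zero]⟩
  · exact ⟨1, Pi.single j 1, 0, by rw [pauliX_eq, one_smul]⟩
  · exact ⟨1, 0, Pi.single j 1, by rw [pauliZ_eq, one_smul]⟩

lemma pauli_scalar_of_trace_ne_zero {U : Matrix (Fin N → ZMod 2) (Fin N → ZMod 2) ℂ}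
    (h : U ∈ pauliGroup N) (htr : Matrix.trace U ≠ 0) : ∃ α : ℂ, U = α • 1 := by
  obtain ⟨α, a, b, rfl⟩ := pauli_struct h
  refine ⟨α, ?_⟩
  have : Matrix.trace (α • XZ a b) = α * Matrix.trace (XZ a b) := by
    rw [Matrix.trace_smul]; rfl
  rw [this, trace_XZ] at htr
  by_cases hab : a = 0 ∧ b = 0
  · rw [hab.1, hab.2, XZ_zero_zero]
  · rw [if_neg hab, mul_zero] at htr
    exact absurd rfl htr

end StabAux

open StabAux in
/-- Let `S_1, …, S_r` be commuting Pauli operators squaring to the identity, generating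
an abelian subgroup `𝒮` of the `N`-qubit Pauli group with `-I ∉ 𝒮`, and independent in
the sense that no nontrivial product of them equals the identity up to phase.  Then the
stabilizer subspace `V_S = {ψ : Uψ = ψ for all U ∈ 𝒮}` has dimension `2^{N-r}`. -/
theorem stabilizer_subspace_dim (N r : ℕ) (hr : r ≤ N)
    (S : Fin r → Matrix (Fin N → ZMod 2) (Fin N → ZMod 2) ℂ)
    (hmem : ∀ j, S j ∈ pauliGroup N)
    (hcomm : ∀ j l, S j * S l = S l * S j)
    (hsq : ∀ j, S j * S j = 1)
    (hneg : (-1 : Matrix (Fin N → ZMod 2) (Fin N → ZMod 2) ℂ) ∉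
      Submonoid.closure (Set.range S))
    (hindep : ∀ f : Fin r → Bool,
      (∃ α : ℂ, ((List.finRange r).map (fun j => if f j then S j else 1)).prod = α • 1) →
      f = fun _ => false) :
    Module.finrank ℂ
      ↥(⨅ U ∈ Submonoid.closure (Set.range S),
        LinearMap.ker (Matrix.mulVecLin U - LinearMap.id)) = 2 ^ (N - r) := by
  classical
  set G : Fin r → Matrix (Fin N → ZMod 2) (Fin N → ZMod 2) ℂ := fun j => 1 + S j with hG
  -- S j commutes with products of the G k
  have hGcomm : ∀ (j : Fin r) (L : List (Fin r)),
      S j * (L.map G).prod = (L.map G).prod * S j := by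
    intro j L
    induction L with
    | nil => simp
    | cons k L ih =>
      have h1 : S j * G k = G k * S j := by
        simp only [hG, mul_add, add_mul, mul_one, one_mul, hcomm j k]
      simp only [List.map_cons, List.prod_cons, ← mul_assoc, h1]
      rw [mul_assoc, ih, mul_assoc]
  -- absorption
  have habsorb : ∀ (j : Fin r) (L : List (Fin r)), j ∈ L →
      S j * (L.map G).prod = (L.map G).prod := by
    intro j L hjL
    induction L with
    | nil => simp at hjL
    | cons k L ih =>
      simp only [List.map_cons, List.prod_cons, ← mul_assoc]
      rcases List.mem_cons.mp hjL with h | h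
      · subst h
        have : S j * G j = G j := by
          simp only [hG, mul_add, mul_one, hsq j, add_comm]
        rw [this]
      · have h1 : S j * G k = G k * S j := by
          simp only [hG, mul_add, add_mul, mul_one, one_mul, hcomm j k]
        rw [h1, mul_assoc, ih h]
  -- squares of products
  have hsqL : ∀ L : List (Fin r),
      (L.map G).prod * (L.map G).prod = (2 : ℂ) ^ L.length • (L.map G).prod := by
    intro L
    induction L with
    | nil => simp
    | cons k L ih =>
      simp only [List.map_cons, List.prod_cons, List.length_cons]
      have hQGk : (L.map G).prod * G k = G k * (L.map G).prod := by
        rw [show G k = 1 + S k from rfl, mul_add, add_mul, mul_one, one_mul, hGcomm k L]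
      have hGkGk : G k * G k = (2 : ℂ) • G k := by
        simp only [hG, mul_add, add_mul, mul_one, one_mul, hsq k]
        ext v w
        simp [Matrix.add_apply, Matrix.smul_apply]
        ring
      calc G k * (L.map G).prod * (G k * (L.map G).prod)
          = G k * ((L.map G).prod * G k) * (L.map G).prod := by
            simp only [mul_assoc]
        _ = (G k * G k) * ((L.map G).prod * (L.map G).prod) := by
            rw [hQGk]; simp only [mul_assoc]
        _ = ((2:ℂ) • G k) * ((2:ℂ) ^ L.length • (L.map G).prod) := by rw [hGkGk, ih]
        _ = (2:ℂ) ^ (L.length + 1) • (G k * (L.map G).prod) := by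
            rw [smul_mul_assoc, mul_smul_comm, smul_smul, pow_succ]
            ring_nf
  -- trace of identity
  have tr1 : Matrix.trace (1 : Matrix (Fin N → ZMod 2) (Fin N → ZMod 2) ℂ) = (2:ℂ)^N := by
    rw [Matrix.trace_one, Fintype.card_fun]
    simp
  -- trace of a nontrivial product of the S j is zero
  have tr0 : ∀ t : List (Fin r), t.Nodup → t ≠ [] →
      Matrix.trace ((t.map S).prod) = 0 := by
    intro t hnd hne
    by_contra htr
    have hmemP : (t.map S).prod ∈ pauliGroup N := by
      refine Submonoid.list_prod_mem _ ?_
      intro x hx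
      obtain ⟨j, _, rfl⟩ := List.mem_map.mp hx
      exact hmem j
    obtain ⟨α, hα⟩ := pauli_scalar_of_trace_ne_zero hmemP htr
    set f : Fin r → Bool := fun j => decide (j ∈ t) with hf
    have hfilnd : ((List.finRange r).filter (fun j => f j)).Nodup :=
      (List.nodup_finRange r).filter _
    have hperm : List.Perm t ((List.finRange r).filter (fun j => f j)) := by
      refine List.perm_of_nodup_nodup_toFinset_eq hnd hfilnd ?_
      ext x
      simp [hf, List.mem_filter, List.mem_finRange]
    have hpc : (t.map S).Pairwise Commute := by
      refine List.Pairwise.map S (fun a b h => h) ?_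
      exact List.pairwise_of_forall (fun a b => hcomm a b) |>.sublist (List.Sublist.refl t)
    have hprodeq : (t.map S).prod = (((List.finRange r).filter (fun j => f j)).map S).prod :=
      List.Perm.prod_eq' (hperm.map S) hpc
    have hdrop : ∀ l : List (Fin r),
        (l.map (fun j => if f j then S j else 1)).prod = ((l.filter (fun j => f j)).map S).prod := by
      intro l
      induction l with
      | nil => simp
      | cons k l ih =>
        by_cases hk : f k <;>
          simp [List.filter_cons, hk, List.prod_cons, ih]
    have hzero := hindep f ⟨α, by rw [hdrop, ← hprodeq, hα]⟩
    obtain ⟨j, hj⟩ := List.exists_mem_of_ne_nil t hne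
    have : f j = true := by simp [hf, hj]
    rw [hzero] at this
    simp at this
  -- main trace computation
  have hmain : ∀ L t : List (Fin r), (L ++ t).Nodup →
      Matrix.trace ((L.map G).prod * (t.map S).prod) =
        if t = [] then (2:ℂ)^N else 0 := by
    intro L
    induction L with
    | nil =>
      intro t hnd
      rw [List.map_nil, List.prod_nil, one_mul]
      by_cases ht : t = []
      · subst ht; simpa using tr1
      · rw [if_neg ht]
        exact tr0 t (by simpa using hnd) ht
    | cons j L ih =>
      intro t hnd
      have hnd0 : (j :: (L ++ t)).Nodup := by simpa using hnd
      have hnd' : (L ++ t).Nodup := (List.nodup_cons.mp hnd0).2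
      have hndjt : (L ++ (j :: t)).Nodup := by
        exact (List.perm_middle.nodup_iff).mpr hnd0
      have hexp : ((j :: L).map G).prod * (t.map S).prod =
          (L.map G).prod * (t.map S).prod +
          (L.map G).prod * (((j :: t)).map S).prod := by
        simp only [List.map_cons, List.prod_cons, hG]
        rw [add_mul, one_mul, add_mul, ← mul_assoc, hGcomm j L, mul_assoc]
      rw [hexp, Matrix.trace_add, ih t hnd', ih (j :: t) hndjt,
        if_neg (by simp : (j : Fin r) :: t ≠ []), add_zero]
  -- the projector
  set Q : Matrix (Fin N → ZMod 2) (Fin N → ZMod 2) ℂ := ((List.finRange r).map G).prod with hQ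
  have trQ : Matrix.trace Q = (2:ℂ)^N := by
    have := hmain (List.finRange r) [] (by simpa using List.nodup_finRange r)
    simpa using this
  have QQ : Q * Q = (2:ℂ)^r • Q := by
    have := hsqL (List.finRange r)
    simpa [List.length_finRange] using this
  have absorbQ : ∀ j, S j * Q = Q := fun j => habsorb j _ (List.mem_finRange j)
  have h2r : ((2:ℂ)^r) ≠ 0 := pow_ne_zero r two_ne_zero
  set P : Matrix (Fin N → ZMod 2) (Fin N → ZMod 2) ℂ := ((2:ℂ)^r)⁻¹ • Q with hP
  have hPP : P * P = P := by
    rw [hP, smul_mul_assoc, mul_smul_comm, QQ, smul_smul, smul_smul]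
    congr 1
    field_simp
  have hSP : ∀ j, S j * P = P := by
    intro j
    rw [hP, mul_smul_comm, absorbQ]
  have htrP : Matrix.trace P = (2:ℂ)^(N - r) := by
    rw [hP, Matrix.trace_smul, trQ, smul_eq_mul,
      show N = (N - r) + r from (Nat.sub_add_cancel hr).symm, pow_add]
    field_simp
    rw [Nat.add_sub_cancel]
  set p : ((Fin N → ZMod 2) → ℂ) →ₗ[ℂ] ((Fin N → ZMod 2) → ℂ) := Matrix.mulVecLin P with hp
  have hpp : p ∘ₗ p = p := by rw [hp, ← Matrix.mulVecLin_mul, hPP]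
  have hproj : LinearMap.IsProj (LinearMap.range p) p := by
    refine ⟨fun x => LinearMap.mem_range_self _ x, ?_⟩
    rintro x ⟨y, rfl⟩
    exact LinearMap.congr_fun hpp y
  -- identify the stabilizer subspace with the range of p
  have hV : (⨅ U ∈ Submonoid.closure (Set.range S),
        LinearMap.ker (Matrix.mulVecLin U - LinearMap.id)) = LinearMap.range p := by
    apply le_antisymm
    · intro ψ hψ
      simp only [Submodule.mem_iInf, LinearMap.mem_ker, LinearMap.sub_apply,
        Matrix.mulVecLin_apply, LinearMap.id_apply, sub_eq_zero] at hψ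
      have hSψ : ∀ j, S j *ᵥ ψ = ψ := fun j =>
        hψ (S j) (Submonoid.subset_closure ⟨j, rfl⟩)
      have hQψ : ∀ L : List (Fin r), (L.map G).prod *ᵥ ψ = (2:ℂ)^L.length • ψ := by
        intro L
        induction L with
        | nil => simp [Matrix.one_mulVec]
        | cons k L ih =>
          simp only [List.map_cons, List.prod_cons, List.length_cons]
          rw [← Matrix.mulVec_mulVec, ih, Matrix.mulVec_smul]
          have : G k *ᵥ ψ = (2:ℂ) • ψ := by
            rw [hG]
            simp only [Matrix.add_mulVec, Matrix.one_mulVec, hSψ k]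
            ext i
            simp [Pi.smul_apply]
            ring
          rw [this, smul_smul, pow_succ]
      have hPψ : P *ᵥ ψ = ψ := by
        rw [hP, Matrix.smul_mulVec, hQψ, List.length_finRange, smul_smul,
          inv_mul_cancel₀ h2r, one_smul]
      exact ⟨ψ, hPψ⟩
    · rintro x ⟨φ, rfl⟩
      simp only [Submodule.mem_iInf, LinearMap.mem_ker, LinearMap.sub_apply,
        Matrix.mulVecLin_apply, LinearMap.id_apply, sub_eq_zero]
      intro U hU
      have hpφ : p φ = P *ᵥ φ := rfl
      rw [hpφ]
      induction hU using Submonoid.closure_induction with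
      | mem x hx =>
        obtain ⟨j, rfl⟩ := hx
        rw [Matrix.mulVec_mulVec, hSP j]
      | one => rw [Matrix.one_mulVec]
      | mul x y hx hy ihx ihy =>
        rw [← Matrix.mulVec_mulVec, ihy, ihx]
  rw [hV]
  have htr : LinearMap.trace ℂ _ p = (Module.finrank ℂ (LinearMap.range p) : ℂ) :=
    hproj.trace
  have htr2 : LinearMap.trace ℂ _ p = Matrix.trace P := by
    rw [LinearMap.trace_eq_matrix_trace ℂ (Pi.basisFun ℂ _) p,
      LinearMap.toMatrix_eq_toMatrix',
      show p = Matrix.toLin' P from (Matrix.toLin'_apply' P).symm,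
      LinearMap.toMatrix'_toLin']
  have hfin : (Module.finrank ℂ (LinearMap.range p) : ℂ) = ((2 ^ (N - r) : ℕ) : ℂ) := by
    rw [← htr, htr2, htrP]
    push_cast
    ring
  exact_mod_cast hfin
end

section
/- Consider a family of stabilizer codes with continuously deformable logical operators on a D-dimensional torus, with k logical qubits, such that for each m the complement of the m-dimensional concatenated unit region R_m supports exactly as many independent logical operators as R_{D−m−1} (i.e. g_{R̄_m} = g_{R_{D−m−1}}). Then the number g_m of m-dimensional logical operators equals g_{D−m} for all m = 0,...,D, where g_m := g_{R_m} − g_{R_{m−1}} and g_{R_{−1}} := 0. -/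
/-- Dimensional duality count.  `gR m` is the number of independent logical operators
supported on the `m`-dimensional concatenated unit region `R_m` of a `D`-dimensional
code with `k` logical qubits; the bipartition identity together with the topological
shrinkage `R̄_m ≃ R_{D-m-1}` gives `gR m + gR (D-m-1) = 2k` for `m < D`, and
`gR D = 2k`.  Then the number `gm m = gR m - gR (m-1)` (with `gR (-1) = 0`, i.e.
`gm 0 = gR 0`) of `m`-dimensional logical operators satisfies `gm m = gm (D - m)`
for all `m = 0, …, D`. -/
theorem dimensional_duality_count (D k : ℕ) (gR : ℕ → ℤ)
    (htop : gR D = 2 * k)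
    (hdual : ∀ m < D, gR m + gR (D - m - 1) = 2 * k)
    (gm : ℕ → ℤ)
    (hgm0 : gm 0 = gR 0)
    (hgm : ∀ m, 1 ≤ m → gm m = gR m - gR (m - 1)) :
    ∀ m ≤ D, gm m = gm (D - m) := by
  intro m hm
  rcases Nat.eq_zero_or_pos m with hm0 | hm1
  · subst hm0
    simp only [Nat.sub_zero]
    rcases Nat.eq_zero_or_pos D with hD0 | hD1
    · simp [hD0]
    · have h0 := hdual 0 hD1
      have hD := hgm D hD1
      rw [hgm0, hD, htop]
      simp only [Nat.sub_zero] at h0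
      linarith
  · rcases lt_or_eq_of_le hm with hlt | heq
    · -- 1 ≤ m < D
      have h1 := hdual m hlt
      have h2 := hdual (m - 1) (lt_of_le_of_lt (Nat.sub_le m 1) hlt)
      have hms : D - (m - 1) - 1 = D - m := by omega
      rw [hms] at h2
      have hDm1 : 1 ≤ D - m := by omega
      rw [hgm m hm1, hgm (D - m) hDm1]
      linarith
    · subst heq
      simp only [Nat.sub_self]
      have hD := hgm m hm1
      have h0 := hdual 0 hm1
      rw [hgm0, hD, htop]
      simp only [Nat.sub_zero] at h0
      linarith
end

section
/- Under the assumptions of the dimensional duality count (g_m = g_{D−m} for all m) together with the property that any m-dimensional and m'-dimensional logical operators commute whenever m + m' < D, there exists a canonical basis of 2k logical operators {ℓ_1,...,ℓ_k; r_1,...,r_k} such that each anti-commuting pair (ℓ_p, r_p) consists of an m_p-dimensional and a (D−m_p)-dimensional logical operator, ℓ_p anti-commutes with r_p, and all other pairs commute. -/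
open Module Submodule

section Aux

set_option linter.unusedSectionVars false

variable {V : Type} [AddCommGroup V] [Module (ZMod 2) V] [Module.Finite (ZMod 2) V]
variable (ω : V →ₗ[ZMod 2] V →ₗ[ZMod 2] ZMod 2)

/-- The perp of a submodule with respect to `ω`. -/
noncomputable def CBperp (S : Submodule (ZMod 2) V) : Submodule (ZMod 2) V :=
  S.dualAnnihilator.comap ω

lemma CBmem_perp {S : Submodule (ZMod 2) V} {v : V} :
    v ∈ CBperp ω S ↔ ∀ s ∈ S, ω v s = 0 := by
  simp [CBperp, Submodule.mem_dualAnnihilator]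

lemma CBomega_bij (hnd : ∀ v : V, v ≠ 0 → ∃ w, ω v w = 1) : Function.Bijective ω := by
  have hinj : Function.Injective ω := by
    rw [← LinearMap.ker_eq_bot, Submodule.eq_bot_iff]
    intro v hv
    by_contra h
    obtain ⟨w, hw⟩ := hnd v h
    have h0 : ω v = 0 := hv
    rw [h0] at hw; simp at hw
  exact ⟨hinj, (LinearMap.injective_iff_surjective_of_finrank_eq_finrank
    (Subspace.dual_finrank_eq).symm).mp hinj⟩

lemma CBfinrank_perp (hnd : ∀ v : V, v ≠ 0 → ∃ w, ω v w = 1) (S : Submodule (ZMod 2) V) :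
    finrank (ZMod 2) (CBperp ω S) + finrank (ZMod 2) S = finrank (ZMod 2) V := by
  let e := LinearEquiv.ofBijective ω (CBomega_bij ω hnd)
  have h1 : finrank (ZMod 2) (CBperp ω S) = finrank (ZMod 2) S.dualAnnihilator :=
    LinearEquiv.finrank_eq (LinearEquiv.ofSubmodule' e S.dualAnnihilator)
  have h2 : finrank (ZMod 2) S.dualAnnihilator = finrank (ZMod 2) (V ⧸ S) :=
    (LinearEquiv.finrank_eq (Subspace.quotEquivAnnihilator S)).symm
  rw [h1, h2, Submodule.finrank_quotient_add_finrank]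

/-- Key duality: anything orthogonal to `W (m+1)` lies in `W (D - m)`. -/
lemma CBstar (D k : ℕ)
    (hsymm : ∀ u v, ω u v = ω v u)
    (hnd : ∀ v : V, v ≠ 0 → ∃ w, ω v w = 1)
    (hrank : Module.finrank (ZMod 2) V = 2 * k)
    (W : ℕ → Submodule (ZMod 2) V)
    (hmono : Monotone W) (hbot : W 0 = ⊥) (htop : W (D + 1) = ⊤)
    (hdual : ∀ m ≤ D,
      Module.finrank (ZMod 2) (W (m + 1)) + Module.finrank (ZMod 2) (W (D - m)) =
        Module.finrank (ZMod 2) (W (D - m + 1)) + Module.finrank (ZMod 2) (W m))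
    (hcomm : ∀ m m', m + m' < D → ∀ u ∈ W (m + 1), ∀ v ∈ W (m' + 1), ω u v = 0) :
    ∀ m ≤ D, ∀ v : V, (∀ u ∈ W (m + 1), ω u v = 0) → v ∈ W (D - m) := by
  -- the quantity finrank W(m+1) + finrank W(D-m) is constant in m
  have hconst : ∀ m ≤ D,
      finrank (ZMod 2) (W (m + 1)) + finrank (ZMod 2) (W (D - m)) =
        finrank (ZMod 2) (W 1) + finrank (ZMod 2) (W D) := by
    intro m hm
    induction m with
    | zero => simp
    | succ n ih =>
      have hd := hdual (n + 1) hm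
      have hn : D - (n + 1) + 1 = D - n := by omega
      rw [hn] at hd
      rw [hd]
      rw [add_comm]
      exact ih (by omega)
  have hsum : ∀ m ≤ D,
      finrank (ZMod 2) (W (m + 1)) + finrank (ZMod 2) (W (D - m)) = 2 * k := by
    intro m hm
    have h1 := hconst m hm
    have h2 := hconst D le_rfl
    rw [Nat.sub_self, hbot, htop] at h2
    simp only [finrank_bot, finrank_top, add_zero] at h2
    rw [h1, ← h2, hrank]
  intro m hm v hv
  -- show W (D - m) = perp of W (m+1)
  have hle : W (D - m) ≤ CBperp ω (W (m + 1)) := by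
    intro u hu
    rw [CBmem_perp]
    intro s hs
    rcases Nat.eq_zero_or_pos (D - m) with h0 | hpos
    · rw [h0, hbot] at hu
      simp only [Submodule.mem_bot] at hu
      rw [hu]; simp
    · have hu' : u ∈ W ((D - m - 1) + 1) := by
        rwa [Nat.sub_add_cancel hpos]
      exact hcomm (D - m - 1) m (by omega) u hu' s hs
  have heq : W (D - m) = CBperp ω (W (m + 1)) := by
    apply Submodule.eq_of_le_of_finrank_eq hle
    have hp := CBfinrank_perp ω hnd (W (m + 1))
    have hs := hsum m hm
    omega
  rw [heq, CBmem_perp]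
  intro s hs
  rw [hsymm]
  exact hv s hs

end Aux

/-- Canonical form of logical operators from dimensional duality.  The space `V` of
logical operators (the centralizer modulo the stabilizer group) of a code with `k`
logical qubits is an `F₂`-space of dimension `2k`, with the nondegenerate alternating
form `ω` recording commutation.  Logical operators are graded by dimension through a
filtration `W 0 = ⊥ ⊆ W 1 ⊆ ⋯ ⊆ W (D+1) = ⊤`, where `W (m+1)` is spanned by the
logical operators of dimension `≤ m`; `hdual` says `g_m = g_{D-m}` and `hcomm` says
that `m`- and `m'`-dimensional logical operators commute when `m + m' < D`.  Then
there is a canonical basis `{ℓ_1, …, ℓ_k; r_1, …, r_k}` such that each anti-commuting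
pair `(ℓ_p, r_p)` consists of an `m_p`-dimensional and a `(D - m_p)`-dimensional
logical operator, `ℓ_p` anti-commutes with `r_p`, and all other pairs commute. -/
theorem canonical_basis_of_dimensional_duality (D k : ℕ)
    (V : Type) [AddCommGroup V] [Module (ZMod 2) V] [Module.Finite (ZMod 2) V]
    (ω : V →ₗ[ZMod 2] V →ₗ[ZMod 2] ZMod 2)
    (hsymm : ∀ u v, ω u v = ω v u) (halt : ∀ v, ω v v = 0)
    (hnd : ∀ v, v ≠ 0 → ∃ w, ω v w = 1)
    (hrank : Module.finrank (ZMod 2) V = 2 * k)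
    (W : ℕ → Submodule (ZMod 2) V)
    (hmono : Monotone W) (hbot : W 0 = ⊥) (htop : W (D + 1) = ⊤)
    (hdual : ∀ m ≤ D,
      Module.finrank (ZMod 2) (W (m + 1)) + Module.finrank (ZMod 2) (W (D - m)) =
        Module.finrank (ZMod 2) (W (D - m + 1)) + Module.finrank (ZMod 2) (W m))
    (hcomm : ∀ m m', m + m' < D → ∀ u ∈ W (m + 1), ∀ v ∈ W (m' + 1), ω u v = 0) :
    ∃ (ℓ r : Fin k → V) (d : Fin k → ℕ),
      (∀ p, d p ≤ D) ∧
      (∀ p, ℓ p ∈ W (d p + 1) ∧ ℓ p ∉ W (d p)) ∧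
      (∀ p, r p ∈ W (D - d p + 1) ∧ r p ∉ W (D - d p)) ∧
      LinearIndependent (ZMod 2) (Sum.elim ℓ r) ∧
      Submodule.span (ZMod 2) (Set.range (Sum.elim ℓ r)) = ⊤ ∧
      (∀ p q, ω (ℓ p) (r q) = if p = q then 1 else 0) ∧
      (∀ p q, ω (ℓ p) (ℓ q) = 0) ∧
      (∀ p q, ω (r p) (r q) = 0) := by
  classical
  -- main construction: j symplectic pairs compatible with the filtration
  have main : ∀ j, j ≤ k → ∃ (ℓ r : Fin j → V) (d : Fin j → ℕ),
      (∀ p, d p ≤ D) ∧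
      (∀ p, ℓ p ∈ W (d p + 1) ∧ ℓ p ∉ W (d p)) ∧
      (∀ p, r p ∈ W (D - d p + 1) ∧ r p ∉ W (D - d p)) ∧
      (∀ p q, ω (ℓ p) (r q) = if p = q then 1 else 0) ∧
      (∀ p q, ω (ℓ p) (ℓ q) = 0) ∧
      (∀ p q, ω (r p) (r q) = 0) := by
    intro j
    induction j with
    | zero =>
      intro _
      exact ⟨Fin.elim0, Fin.elim0, Fin.elim0, fun p => p.elim0, fun p => p.elim0,
        fun p => p.elim0, fun p => p.elim0, fun p => p.elim0, fun p => p.elim0⟩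
    | succ j ih =>
      intro hjk
      obtain ⟨ℓ, r, d, hdD, hℓW, hrW, hδ, hℓℓ, hrr⟩ := ih (by omega)
      set S : Submodule (ZMod 2) V :=
        Submodule.span (ZMod 2) (Set.range (Sum.elim ℓ r)) with hS
      set U : Submodule (ZMod 2) V := CBperp ω S with hU
      have hℓS : ∀ p, ℓ p ∈ S := fun p =>
        Submodule.subset_span ⟨Sum.inl p, rfl⟩
      have hrS : ∀ p, r p ∈ S := fun p =>
        Submodule.subset_span ⟨Sum.inr p, rfl⟩
      -- U is nontrivial
      have hSfin : finrank (ZMod 2) S ≤ 2 * j := by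
        refine le_trans (finrank_span_le_card _) ?_
        have := Fintype.card_range_le (Sum.elim ℓ r)
        rw [Set.toFinset_card]
        simpa [two_mul] using this
      have hUne : U ≠ ⊥ := by
        intro hUbot
        have := CBfinrank_perp ω hnd S
        rw [← hU, hUbot] at this
        simp only [finrank_bot, zero_add] at this
        omega
      obtain ⟨u, huU, hune⟩ := Submodule.ne_bot_iff U |>.mp hUne
      -- minimal level meeting U
      have hPD : ∃ v, v ∈ W (D + 1) ⊓ U ∧ v ≠ 0 := by
        refine ⟨u, ?_, hune⟩
        rw [htop]
        exact ⟨trivial, huU⟩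
      set P : ℕ → Prop := fun m => ∃ v, v ∈ W (m + 1) ⊓ U ∧ v ≠ 0 with hP
      have hPDex : P D := hPD
      let m₀ := Nat.find ⟨D, hPDex⟩
      have hm₀D : m₀ ≤ D := Nat.find_le hPDex
      obtain ⟨ℓ', hℓ'mem, hℓ'ne⟩ : P m₀ := Nat.find_spec ⟨D, hPDex⟩
      obtain ⟨hℓ'W, hℓ'U⟩ := hℓ'mem
      have hℓ'U' : ∀ s ∈ S, ω ℓ' s = 0 := (CBmem_perp ω).mp hℓ'U
      have hℓ'not : ℓ' ∉ W m₀ := by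
        intro hmem
        rcases Nat.eq_zero_or_pos m₀ with h0 | hpos
        · rw [h0, hbot] at hmem
          exact hℓ'ne hmem
        · have : P (m₀ - 1) := ⟨ℓ', ⟨by rwa [Nat.sub_add_cancel hpos], hℓ'U⟩, hℓ'ne⟩
          exact Nat.find_min ⟨D, hPDex⟩ (by omega) this
      -- find a partner in W (D - m₀ + 1)
      have hr₀ex : ∃ u ∈ W (D - m₀ + 1), ω u ℓ' ≠ 0 := by
        by_contra h
        push_neg at h
        have := CBstar ω D k hsymm hnd hrank W hmono hbot htop hdual hcomm
          (D - m₀) (by omega) ℓ' h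
        rw [show D - (D - m₀) = m₀ by omega] at this
        exact hℓ'not this
      obtain ⟨r₀, hr₀W, hr₀ne⟩ := hr₀ex
      have hr₀ℓ' : ω r₀ ℓ' = 1 := by
        rcases (show ∀ x : ZMod 2, x = 0 ∨ x = 1 by decide) (ω r₀ ℓ') with h | h
        · exact absurd h hr₀ne
        · exact h
      have hℓ'r₀ : ω ℓ' r₀ = 1 := by rw [hsymm]; exact hr₀ℓ'
      have haddself : ∀ x : ZMod 2, x + x = 0 := by decide
      -- corrected partner
      set r' : V := r₀ + (∑ p, (ω r₀ (r p)) • ℓ p) + (∑ p, (ω r₀ (ℓ p)) • r p) with hr'def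
      have hωr' : ∀ x : V, ω x r' = ω x r₀ + (∑ p, (ω r₀ (r p)) * ω x (ℓ p))
          + (∑ p, (ω r₀ (ℓ p)) * ω x (r p)) := by
        intro x
        simp [hr'def, map_add, map_sum, map_smul, smul_eq_mul, Finset.mul_sum]
      -- r' lies in the right filtration level
      have hr'W : r' ∈ W (D - m₀ + 1) := by
        refine Submodule.add_mem _ (Submodule.add_mem _ hr₀W ?_) ?_
        · refine Submodule.sum_mem _ fun p _ => ?_
          by_cases hc : ω r₀ (r p) = 0
          · rw [hc, zero_smul]; exact Submodule.zero_mem _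
          · refine Submodule.smul_mem _ _ ?_
            have hdpD := hdD p
            have hdp : d p ≤ D - m₀ := by
              by_contra hgt
              exact hc (hcomm (D - m₀) (D - d p) (by omega) r₀ hr₀W (r p) (hrW p).1)
            exact hmono (by omega) (hℓW p).1
        · refine Submodule.sum_mem _ fun p _ => ?_
          by_cases hc : ω r₀ (ℓ p) = 0
          · rw [hc, zero_smul]; exact Submodule.zero_mem _
          · refine Submodule.smul_mem _ _ ?_
            have hdpD := hdD p
            have hdp : m₀ ≤ d p := by
              by_contra hgt
              exact hc (hcomm (D - m₀) (d p) (by omega) r₀ hr₀W (ℓ p) (hℓW p).1)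
            exact hmono (by omega) (hrW p).1
      -- pairing values with r'
      have hδ'' : ∀ p q, ω (r p) (ℓ q) = if q = p then 1 else 0 := fun p q => by
        rw [hsymm, hδ]
      have hℓpr' : ∀ p, ω (ℓ p) r' = 0 := by
        intro p
        rw [hωr' (ℓ p)]
        simp only [hℓℓ, hδ, mul_zero, Finset.sum_const_zero, add_zero, mul_ite, mul_one,
          Finset.sum_ite_eq, Finset.mem_univ, if_true]
        rw [hsymm (ℓ p) r₀]
        exact haddself _
      have hrpr' : ∀ p, ω (r p) r' = 0 := by
        intro p
        rw [hωr' (r p)]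
        simp only [hrr, hδ'', mul_zero, Finset.sum_const_zero, add_zero, mul_ite, mul_one,
          Finset.sum_ite_eq', Finset.mem_univ, if_true]
        rw [hsymm (r p) r₀]
        exact haddself _
      have hℓ'ℓp : ∀ p, ω ℓ' (ℓ p) = 0 := fun p => hℓ'U' _ (hℓS p)
      have hℓ'rp : ∀ p, ω ℓ' (r p) = 0 := fun p => hℓ'U' _ (hrS p)
      have hℓ'r' : ω ℓ' r' = 1 := by
        rw [hωr' ℓ']
        simp only [hℓ'ℓp, hℓ'rp, mul_zero, Finset.sum_const_zero, add_zero]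
        exact hℓ'r₀
      have hr'not : r' ∉ W (D - m₀) := by
        intro hmem
        rcases Nat.eq_zero_or_pos (D - m₀) with h0 | hpos
        · rw [h0, hbot, Submodule.mem_bot] at hmem
          rw [hmem] at hℓ'r'
          simp at hℓ'r'
        · have h0 : ω ℓ' r' = 0 := hcomm m₀ (D - m₀ - 1) (by omega) ℓ' hℓ'W r'
            (by rwa [Nat.sub_add_cancel hpos])
          rw [h0] at hℓ'r'
          exact absurd hℓ'r' (by decide)
      -- assemble
      have hne : ∀ i : Fin j, (Fin.last j ≠ i.castSucc) := fun i => (Fin.castSucc_lt_last i).ne'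
      refine ⟨Fin.snoc ℓ ℓ', Fin.snoc r r', Fin.snoc d m₀, ?_, ?_, ?_, ?_, ?_, ?_⟩
      · refine Fin.lastCases ?_ ?_
        · simpa using hm₀D
        · intro i; simpa using hdD i
      · refine Fin.lastCases ?_ ?_
        · simpa using ⟨hℓ'W, hℓ'not⟩
        · intro i; simpa using hℓW i
      · refine Fin.lastCases ?_ ?_
        · simpa using ⟨hr'W, hr'not⟩
        · intro i; simpa using hrW i
      · refine Fin.lastCases ?_ ?_
        · refine Fin.lastCases ?_ ?_
          · simpa using hℓ'r'
          · intro i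
            simp only [Fin.snoc_last, Fin.snoc_castSucc]
            rw [if_neg (hne i)]
            exact hℓ'rp i
        · intro p
          refine Fin.lastCases ?_ ?_
          · simp only [Fin.snoc_last, Fin.snoc_castSucc]
            rw [if_neg (hne p).symm]
            exact hℓpr' p
          · intro q
            simp only [Fin.snoc_castSucc, Fin.castSucc_inj]
            exact hδ p q
      · refine Fin.lastCases ?_ ?_
        · refine Fin.lastCases ?_ ?_
          · simpa using halt ℓ'
          · intro i; simpa using hℓ'ℓp i
        · intro p
          refine Fin.lastCases ?_ ?_
          · simp only [Fin.snoc_last, Fin.snoc_castSucc]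
            rw [hsymm]
            exact hℓ'ℓp p
          · intro q; simpa using hℓℓ p q
      · refine Fin.lastCases ?_ ?_
        · refine Fin.lastCases ?_ ?_
          · simpa using halt r'
          · intro i
            simp only [Fin.snoc_last, Fin.snoc_castSucc]
            rw [hsymm]
            exact hrpr' i
        · intro p
          refine Fin.lastCases ?_ ?_
          · simpa using hrpr' p
          · intro q; simpa using hrr p q
  -- conclude
  obtain ⟨ℓ, r, d, hdD, hℓW, hrW, hδ, hℓℓ, hrr⟩ := main k le_rfl
  have hδ' : ∀ p q, ω (r p) (ℓ q) = if q = p then 1 else 0 := fun p q => by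
    rw [hsymm, hδ]
  have hli : LinearIndependent (ZMod 2) (Sum.elim ℓ r) := by
    rw [Fintype.linearIndependent_iff]
    intro g hg
    have key : ∀ x : V, (∑ i, g i * ω (Sum.elim ℓ r i) x) = 0 := by
      intro x
      have := congrArg (fun v => ω v x) hg
      simpa [map_sum, map_smul] using this
    have hL : ∀ q, g (Sum.inl q) = 0 := by
      intro q
      have := key (r q)
      rw [Fintype.sum_sum_type] at this
      simpa [hδ, hrr, mul_ite, Finset.sum_ite_eq] using this
    have hR : ∀ q, g (Sum.inr q) = 0 := by
      intro q
      have := key (ℓ q)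
      rw [Fintype.sum_sum_type] at this
      simpa [hℓℓ, hδ', mul_ite, Finset.sum_ite_eq] using this
    intro i
    cases i with
    | inl p => exact hL p
    | inr p => exact hR p
  have hsp : Submodule.span (ZMod 2) (Set.range (Sum.elim ℓ r)) = ⊤ := by
    apply Submodule.eq_top_of_finrank_eq
    rw [finrank_span_eq_card hli, hrank]
    simp [two_mul]
  exact ⟨ℓ, r, d, hdD, hℓW, hrW, hli, hsp, hδ, hℓℓ, hrr⟩
end

section
/- Define maps f₀, f₁ from Pauli column operators of length 2^{m'} to length 2^{m'−1} by f₀(U)_j = U_j·U_{j+2^{m'−1}} and f₁(U)_j = U_j, and assign to each nonidentity column operator U a characteristic vector b(U) ∈ {0,1}^m by the iterative rule: b_m = 1 and recurse on f₁(U) if f₀(U) = I, else b_m = 0 and recurse on f₀(U). Then the resulting characteristic operator V(U) = f_{b_1}∘···∘f_{b_m}(U) is not the identity whenever U ≠ I. -/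
/-- The Pauli group modulo phases on a composite particle of `v` qubits, as an
`F₂`-vector space (so multiplication of Pauli operators is written additively and
the identity is `0`). -/
abbrev PauliMP (v : ℕ) := (Fin v → ZMod 2) × (Fin v → ZMod 2)

/-- `f₀` halves the length of a column operator: `f₀(U)_j = U_j · U_{j + 2^{m}}`. -/
def colF0 (v m : ℕ) (U : Fin (2 ^ (m + 1)) → PauliMP v) : Fin (2 ^ m) → PauliMP v :=
  fun j =>
    U ⟨j.val, lt_of_lt_of_le j.isLt (Nat.pow_le_pow_right (by norm_num) (Nat.le_succ m))⟩ +
    U ⟨j.val + 2 ^ m, by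
        have h := j.isLt
        have h2 : 2 ^ (m + 1) = 2 ^ m + 2 ^ m := by ring
        omega⟩

/-- `f₁` truncates a column operator to its first half: `f₁(U)_j = U_j`. -/
def colF1 (v m : ℕ) (U : Fin (2 ^ (m + 1)) → PauliMP v) : Fin (2 ^ m) → PauliMP v :=
  fun j =>
    U ⟨j.val, lt_of_lt_of_le j.isLt (Nat.pow_le_pow_right (by norm_num) (Nat.le_succ m))⟩

/-- The characteristic data `(b(U), V(U))` of a column operator `U` on `2^m`
composite particles: iteratively, `b_m = 1` and recurse on `f₁(U)` if `f₀(U) = I`,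
else `b_m = 0` and recurse on `f₀(U)`; the characteristic operator `V(U)` is the
single Pauli element remaining after `m` steps.  (The bit `b_i` of the paper is
`(charData v m U).1 ⟨i-1, _⟩`.) -/
def charData (v : ℕ) : (m : ℕ) → (Fin (2 ^ m) → PauliMP v) → (Fin m → Bool) × PauliMP v
  | 0, U => (Fin.elim0, U ⟨0, by norm_num⟩)
  | m + 1, U =>
    if colF0 v m U = 0 then
      (Fin.snoc (charData v m (colF1 v m U)).1 true, (charData v m (colF1 v m U)).2)
    else
      (Fin.snoc (charData v m (colF0 v m U)).1 false, (charData v m (colF0 v m U)).2)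

/-- The characteristic operator `V(U) = f_{b_1} ∘ ⋯ ∘ f_{b_m}(U)` of a nonidentity
column operator is itself not the identity. -/
theorem charOperator_ne_zero (v m : ℕ) (U : Fin (2 ^ m) → PauliMP v) (hU : U ≠ 0) :
    (charData v m U).2 ≠ 0 := by
  induction m with
  | zero =>
    simp only [charData]
    intro h
    apply hU
    funext j
    have : j = ⟨0, by norm_num⟩ := by
      ext; omega
    rw [this, h]; rfl
  | succ m ih =>
    simp only [charData]
    split
    · rename_i h0
      apply ih
      intro h1
      apply hU
      funext j
      by_cases hj : j.val < 2 ^ m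
      · have := congrFun h1 ⟨j.val, hj⟩
        simpa [colF1] using this
      · have hj2 : j.val - 2 ^ m < 2 ^ m := by
          have := j.isLt
          have h2 : (2:ℕ) ^ (m + 1) = 2 ^ m + 2 ^ m := by ring
          omega
        have e0 := congrFun h0 ⟨j.val - 2 ^ m, hj2⟩
        have e1 := congrFun h1 ⟨j.val - 2 ^ m, hj2⟩
        simp only [colF0, colF1, Pi.zero_apply] at e0 e1
        have hje : (⟨j.val - 2 ^ m + 2 ^ m, by have := j.isLt; have h2 : (2:ℕ) ^ (m + 1) = 2 ^ m + 2 ^ m := (by ring); omega⟩ : Fin (2 ^ (m+1))) = j := by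
          ext; simp; omega
        rw [e1, zero_add, hje] at e0
        exact e0
    · rename_i h0
      exact ih _ h0
end

section
/- With the characteristic vector assignment as above, if U and U' are column operators with characteristic vectors b(U) > b(U') (in the order given by comparing Σ b_j 2^{j−1}) and U'' = U·U' ≠ I, then b(U'') = b(U') and the characteristic operator of U'' equals that of U'. -/
/-- The numerical value `g(b) = Σ b_j 2^{j-1}` of a binary vector, giving the order
on characteristic vectors. -/
def gval {m : ℕ} (b : Fin m → Bool) : ℕ :=
  ∑ j, if b j then 2 ^ (j : ℕ) else 0

lemma gval_snoc {m : ℕ} (b : Fin m → Bool) (t : Bool) :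
    gval (Fin.snoc b t) = gval b + (if t then 2 ^ m else 0) := by
  unfold gval
  rw [Fin.sum_univ_castSucc]
  simp [Fin.snoc_castSucc, Fin.snoc_last]

lemma gval_lt {m : ℕ} (b : Fin m → Bool) : gval b < 2 ^ m := by
  induction m with
  | zero => simp [gval]
  | succ m ih =>
    have h := Fin.snoc_init_self b
    rw [← h, gval_snoc]
    have := ih (Fin.init b)
    have h2 : 2 ^ (m + 1) = 2 ^ m + 2 ^ m := by ring
    split <;> omega

lemma colF0_add (v m : ℕ) (U U' : Fin (2 ^ (m + 1)) → PauliMP v) :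
    colF0 v m (U + U') = colF0 v m U + colF0 v m U' := by
  funext j
  simp only [colF0, Pi.add_apply]
  abel

lemma colF1_add (v m : ℕ) (U U' : Fin (2 ^ (m + 1)) → PauliMP v) :
    colF1 v m (U + U') = colF1 v m U + colF1 v m U' := by
  funext j
  simp only [colF1, Pi.add_apply]

lemma pauli_add_self {v : ℕ} (x : PauliMP v) : x + x = 0 := by
  apply Prod.ext <;> funext j <;>
    simpa using CharTwo.add_self_eq_zero (R := ZMod 2) _

lemma col_add_self {v n : ℕ} (F : Fin n → PauliMP v) : F + F = 0 := by
  funext j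
  exact pauli_add_self (F j)

lemma col_eq_of_add_eq_zero {v n : ℕ} {F G : Fin n → PauliMP v}
    (h : F + G = 0) : F = G := by
  have h1 : F = -G := eq_neg_of_add_eq_zero_left h
  have h2 : -G = G := neg_eq_of_add_eq_zero_left (col_add_self G)
  rw [h1, h2]

lemma col_eq_zero_of_f0_f1 {v m : ℕ} (U : Fin (2 ^ (m + 1)) → PauliMP v)
    (h0 : colF0 v m U = 0) (h1 : colF1 v m U = 0) : U = 0 := by
  have h2 : 2 ^ (m + 1) = 2 ^ m + 2 ^ m := by ring
  funext j
  rcases lt_or_ge j.val (2 ^ m) with h | h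
  · have := congrFun h1 ⟨j.val, h⟩
    simpa [colF1] using this
  · have hi : j.val - 2 ^ m < 2 ^ m := by have := j.isLt; omega
    have h0' := congrFun h0 ⟨j.val - 2 ^ m, hi⟩
    have h1' := congrFun h1 ⟨j.val - 2 ^ m, hi⟩
    simp only [colF0, colF1, Pi.zero_apply] at h0' h1'
    have hj : (⟨j.val - 2 ^ m + 2 ^ m, by omega⟩ : Fin (2 ^ (m + 1))) = j := by
      apply Fin.ext; simp; omega
    rw [hj, h1', zero_add] at h0'
    exact h0'

/-- If `U` and `U'` are (nonidentity) column operators with characteristic vectors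
`b(U) > b(U')` and `U'' = U · U' ≠ I`, then `b(U'') = b(U')` and the characteristic
operator of `U''` equals that of `U'`. -/
theorem charData_mul_of_gt (v m : ℕ) (U U' : Fin (2 ^ m) → PauliMP v)
    (hU : U ≠ 0) (hU' : U' ≠ 0)
    (hgt : gval (charData v m U).1 > gval (charData v m U').1)
    (hne : U + U' ≠ 0) :
    (charData v m (U + U')).1 = (charData v m U').1 ∧
    (charData v m (U + U')).2 = (charData v m U').2 := by
  induction m with
  | zero =>
    simp only [charData, gval] at hgt
    simp at hgt
  | succ m ih =>
    by_cases h0 : colF0 v m U = 0 <;> by_cases h0' : colF0 v m U' = 0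
    · -- both bits true: recurse on f₁
      have hadd : colF0 v m (U + U') = 0 := by
        rw [colF0_add, h0, h0', add_zero]
      simp only [charData, if_pos h0, if_pos h0', if_pos hadd] at hgt ⊢
      rw [gval_snoc, gval_snoc] at hgt
      simp only [if_pos] at hgt
      have hgt' : gval (charData v m (colF1 v m U)).1 >
          gval (charData v m (colF1 v m U')).1 := by omega
      have h1 : colF1 v m U ≠ 0 := fun h => hU (col_eq_zero_of_f0_f1 U h0 h)
      have h1' : colF1 v m U' ≠ 0 := fun h => hU' (col_eq_zero_of_f0_f1 U' h0' h)
      have h1'' : colF1 v m U + colF1 v m U' ≠ 0 := by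
        rw [← colF1_add]
        exact fun h => hne (col_eq_zero_of_f0_f1 (U + U') hadd h)
      obtain ⟨ha, hb⟩ := ih (colF1 v m U) (colF1 v m U') h1 h1' hgt' h1''
      rw [colF1_add]
      exact ⟨by rw [ha], by rw [hb]⟩
    · -- b(U) bit true, b(U') bit false: f₀(U+U') = f₀(U') ≠ 0
      have hadd : colF0 v m (U + U') = colF0 v m U' := by
        rw [colF0_add, h0, zero_add]
      have hadd' : colF0 v m (U + U') ≠ 0 := by rw [hadd]; exact h0'
      simp only [charData, if_neg h0', if_neg hadd', hadd]
      exact ⟨trivial, trivial⟩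
    · -- b(U) bit false, b(U') bit true: contradicts hgt
      exfalso
      simp only [charData, if_neg h0, if_pos h0'] at hgt
      rw [gval_snoc, gval_snoc] at hgt
      simp only [if_pos, if_neg] at hgt
      have := gval_lt (charData v m (colF0 v m U)).1
      simp at hgt
      omega
    · -- both bits false: recurse on f₀ (or contradiction if f₀U = f₀U')
      have haddeq : colF0 v m (U + U') = colF0 v m U + colF0 v m U' :=
        colF0_add v m U U'
      by_cases hz : colF0 v m U + colF0 v m U' = 0
      · exfalso
        have heq : colF0 v m U = colF0 v m U' := col_eq_of_add_eq_zero hz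
        simp only [charData, if_neg h0, if_neg h0', heq] at hgt
        omega
      · have hadd' : colF0 v m (U + U') ≠ 0 := by rw [haddeq]; exact hz
        simp only [charData, if_neg h0, if_neg h0', if_neg hadd'] at hgt ⊢
        rw [gval_snoc, gval_snoc] at hgt
        norm_num at hgt
        have hgt' : gval (charData v m (colF0 v m U)).1 >
            gval (charData v m (colF0 v m U')).1 := by omega
        obtain ⟨ha, hb⟩ := ih (colF0 v m U) (colF0 v m U') h0 h0' hgt' hz
        rw [haddeq]
        exact ⟨by rw [ha], by rw [hb]⟩
end
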